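/- Let U be a k-dimensional F_q-subspace of F_{q^n} with Stab(U) = F_q^* and maximal intersection dimension 2 (i.e., dim(U ∩ αU) ≤ 2 for αU ≠ U, with equality for some α). Then there is at most one 2-dimensional subspace V such that V = U ∩ αU for some α ∈ F_{q^n}^* and V = γF_{q^2} for some γ ∈ F_{q^n}^*. -/

import Mathlib

open Pointwise

lemma smul_subfield_eq (K : Type) [Field K] (E : Subfield K) (ρ : K)
    (hρE : ρ ∈ E) (hρ0 : ρ ≠ 0) : ρ • (E : Set K) = E := by
  ext x
  constructor
  · rintro ⟨y, hy, rfl⟩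
    exact E.mul_mem hρE hy
  · intro hx
    exact ⟨ρ⁻¹ * x, E.mul_mem (E.inv_mem hρE) hx, by show ρ • (ρ⁻¹ * x) = x; rw [smul_eq_mul, ← mul_assoc, mul_inv_cancel₀ hρ0, one_mul]⟩

lemma map_mul_of_smul_eq (F K : Type) [Field F] [Field K] [Algebra F K]
    (E : Subfield K) (V : Submodule F K) (γ ρ : K)
    (hρE : ρ ∈ E) (hρ0 : ρ ≠ 0) (hs : (V : Set K) = γ • (E : Set K)) :
    Submodule.map (LinearMap.mulLeft F ρ) V = V := by
  apply SetLike.ext'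
  have h1 : ((Submodule.map (LinearMap.mulLeft F ρ) V : Submodule F K) : Set K)
      = ρ • (V : Set K) := by
    ext x
    simp [Submodule.mem_map, Set.mem_smul_set, LinearMap.mulLeft_apply, smul_eq_mul]
  rw [h1, hs, smul_comm, smul_subfield_eq K E ρ hρE hρ0]

/-- For a full-length orbit with maximal intersection dimension `2`, there is at
most one `2`-dimensional subspace `V` with `V = U ∩ αU` for some `α` and
`V = γ·F_{q^2}` for some `γ`. -/
theorem stmt_16 (F K : Type) [Field F] [Field K] [Algebra F K]
    [Fintype F] [Fintype K] (q n k : ℕ)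
    (hq : Fintype.card F = q) (hn : Module.finrank F K = n)
    (U : Submodule F K) (hk : Module.finrank F U = k)
    (E : Subfield K) (hE : Nat.card E = q ^ 2)
    (hFE : Set.range (algebraMap F K) ⊆ (E : Set K))
    (hstab : ∀ α : K, α ≠ 0 → Submodule.map (LinearMap.mulLeft F α) U = U →
      ∃ c : F, c ≠ 0 ∧ α = algebraMap F K c)
    (hdist : ∀ α : K, α ≠ 0 → Submodule.map (LinearMap.mulLeft F α) U ≠ U →
      Module.finrank F ↥(U ⊓ Submodule.map (LinearMap.mulLeft F α) U) ≤ 2)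
    (hex : ∃ α : K, α ≠ 0 ∧ Submodule.map (LinearMap.mulLeft F α) U ≠ U ∧
      Module.finrank F ↥(U ⊓ Submodule.map (LinearMap.mulLeft F α) U) = 2) :
    ∀ V₁ V₂ : Submodule F K,
      ((∃ α : K, α ≠ 0 ∧ V₁ = U ⊓ Submodule.map (LinearMap.mulLeft F α) U ∧
          Module.finrank F V₁ = 2) ∧
        ∃ γ : K, γ ≠ 0 ∧ (V₁ : Set K) = γ • (E : Set K)) →
      ((∃ α : K, α ≠ 0 ∧ V₂ = U ⊓ Submodule.map (LinearMap.mulLeft F α) U ∧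
          Module.finrank F V₂ = 2) ∧
        ∃ γ : K, γ ≠ 0 ∧ (V₂ : Set K) = γ • (E : Set K)) →
      V₁ = V₂ := by
  rintro V₁ V₂ ⟨⟨α₁, hα₁, hV₁, hd₁⟩, γ₁, hγ₁, hs₁⟩ ⟨⟨α₂, hα₂, hV₂, hd₂⟩, γ₂, hγ₂, hs₂⟩
  by_contra hne
  have hq2 : 1 < q := hq ▸ Fintype.one_lt_card
  -- find ρ ∈ E outside the range of algebraMap
  have hcard : Nat.card (Set.range (algebraMap F K)) = q := by
    rw [Nat.card_range_of_injective (algebraMap F K).injective,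
      Nat.card_eq_fintype_card, hq]
  obtain ⟨ρ, hρE, hρr⟩ : ∃ ρ ∈ (E : Set K), ρ ∉ Set.range (algebraMap F K) := by
    by_contra h
    push_neg at h
    have hle : Nat.card (E : Set K) ≤ Nat.card (Set.range (algebraMap F K)) :=
      Nat.card_mono (Set.toFinite _) h
    have hEq : Nat.card (E : Set K) = q ^ 2 := hE
    rw [hEq, hcard] at hle
    have : q < q ^ 2 := by
      calc q = q ^ 1 := (pow_one q).symm
      _ < q ^ 2 := Nat.pow_lt_pow_right hq2 one_lt_two
    omega
  have hρ0 : ρ ≠ 0 := by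
    rintro rfl
    exact hρr ⟨0, by simp⟩
  -- ρU ≠ U
  have hρU : Submodule.map (LinearMap.mulLeft F ρ) U ≠ U := by
    intro h
    obtain ⟨c, hc, hρc⟩ := hstab ρ hρ0 h
    exact hρr ⟨c, hρc.symm⟩
  have hdim : Module.finrank F ↥(U ⊓ Submodule.map (LinearMap.mulLeft F ρ) U) ≤ 2 :=
    hdist ρ hρ0 hρU
  -- V₁ and V₂ are both contained in U ⊓ ρU
  have hV₁U : V₁ ≤ U := hV₁ ▸ inf_le_left
  have hV₂U : V₂ ≤ U := hV₂ ▸ inf_le_left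
  have hm₁ : Submodule.map (LinearMap.mulLeft F ρ) V₁ = V₁ :=
    map_mul_of_smul_eq F K E V₁ γ₁ ρ hρE hρ0 hs₁
  have hm₂ : Submodule.map (LinearMap.mulLeft F ρ) V₂ = V₂ :=
    map_mul_of_smul_eq F K E V₂ γ₂ ρ hρE hρ0 hs₂
  have hV₁ρ : V₁ ≤ Submodule.map (LinearMap.mulLeft F ρ) U :=
    hm₁ ▸ Submodule.map_mono hV₁U
  have hV₂ρ : V₂ ≤ Submodule.map (LinearMap.mulLeft F ρ) U :=
    hm₂ ▸ Submodule.map_mono hV₂U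
  have hsup : V₁ ⊔ V₂ ≤ U ⊓ Submodule.map (LinearMap.mulLeft F ρ) U :=
    sup_le (le_inf hV₁U hV₁ρ) (le_inf hV₂U hV₂ρ)
  -- dimension count
  haveI : Module.Finite F K := Module.Finite.of_finite
  have hinf2 : Module.finrank F ↥(V₁ ⊓ V₂) ≤ 1 := by
    by_contra h
    push_neg at h
    have h1 : V₁ ⊓ V₂ = V₁ :=
      Submodule.eq_of_le_of_finrank_le inf_le_left (by omega)
    have h2 : V₁ ⊓ V₂ = V₂ :=
      Submodule.eq_of_le_of_finrank_le inf_le_right (by omega)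
    exact hne (h1 ▸ h2)
  have hsum := Submodule.finrank_sup_add_finrank_inf_eq V₁ V₂
  have hsup3 : 3 ≤ Module.finrank F ↥(V₁ ⊔ V₂) := by omega
  have := Submodule.finrank_mono hsup
  omega
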